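/- Let p be a prime and let A be a sequence (multiset) of p nonzero elements of F_p. Then A is complete: every element of F_p can be written as a sum of elements of some nonempty submultiset of A. -/

import Mathlib

noncomputable def SS {p : ℕ} [NeZero p] (A : Multiset (ZMod p)) : Finset (ZMod p) :=
  @Finset.filter _ (fun y => ∃ B ≤ A, B ≠ 0 ∧ B.sum = y) (Classical.decPred _) Finset.univ

lemma mem_SS {p : ℕ} [NeZero p] {A : Multiset (ZMod p)} {y : ZMod p} :
    y ∈ SS A ↔ ∃ B ≤ A, B ≠ 0 ∧ B.sum = y := by
  simp [SS]

lemma card_SS {p : ℕ} (hp : p.Prime) [NeZero p] :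
    ∀ l : List (ZMod p), (∀ x ∈ l, x ≠ 0) →
      min p l.length ≤ (SS (↑l : Multiset (ZMod p))).card := by
  haveI : Fact p.Prime := ⟨hp⟩
  intro l
  induction l with
  | nil => intro _; simp
  | cons a l ih =>
    intro hnz
    have ha : a ≠ 0 := hnz a List.mem_cons_self
    have hS := ih (fun x hx => hnz x (List.mem_cons_of_mem a hx))
    set S := SS (↑l : Multiset (ZMod p)) with hSdef
    set T := SS (↑(a :: l) : Multiset (ZMod p)) with hTdef
    have hsub : S ⊆ T := by
      intro y hy
      rw [mem_SS] at hy ⊢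
      obtain ⟨B, hB, hB0, hBs⟩ := hy
      exact ⟨B, le_trans hB (by simpa using (List.sublist_cons_self a l).subperm), hB0, hBs⟩
    have haT : a ∈ T := by
      rw [mem_SS]
      exact ⟨{a}, by simp, by simp, by simp⟩
    have himg : Finset.image (a + ·) S ⊆ T := by
      intro y hy
      simp only [Finset.mem_image] at hy
      obtain ⟨z, hz, rfl⟩ := hy
      rw [mem_SS] at hz ⊢
      obtain ⟨B, hB, hB0, hBs⟩ := hz
      exact ⟨a ::ₘ B, by simpa using Multiset.cons_le_cons a hB, by simp, by simp [hBs]⟩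
    rcases le_or_gt p S.card with h | h
    · calc min p (a :: l).length ≤ p := min_le_left _ _
        _ ≤ S.card := h
        _ ≤ T.card := Finset.card_le_card hsub
    · rcases lt_or_ge S.card T.card with h2 | h2
      · simp only [List.length_cons] at *
        omega
      · have hST : S = T := Finset.eq_of_subset_of_card_le hsub h2
        have hclosed : ∀ z ∈ S, a + z ∈ S := fun z hz =>
          hST ▸ himg (Finset.mem_image_of_mem _ hz)
        have haS : a ∈ S := hST ▸ haT
        have hmul : ∀ n : ℕ, (n + 1) • a ∈ S := by
          intro n
          induction n with
          | zero => simpa using haS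
          | succ n ih2 =>
            rw [succ_nsmul, add_comm]
            exact hclosed _ ih2
        have huniv : ∀ z : ZMod p, z ∈ S := by
          intro z
          obtain ⟨n, hn⟩ : ∃ n : ℕ, (n + 1) • a = z := by
            refine ⟨(z * a⁻¹).val + p - 1, ?_⟩
            have h1 : (z * a⁻¹).val + p - 1 + 1 = (z * a⁻¹).val + p := by
              have := hp.pos; omega
            rw [h1, add_nsmul, nsmul_eq_mul, nsmul_eq_mul]
            rw [ZMod.natCast_self, zero_mul, add_zero, ZMod.natCast_val, ZMod.cast_id,
                mul_assoc, inv_mul_cancel₀ ha, mul_one]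
          exact hn ▸ hmul n
        have hU : S = Finset.univ := Finset.eq_univ_iff_forall.mpr huniv
        have : S.card = p := by rw [hU, Finset.card_univ, ZMod.card]
        calc min p (a :: l).length ≤ p := min_le_left _ _
          _ = S.card := this.symm
          _ ≤ T.card := Finset.card_le_card hsub

theorem complete_of_nonzero {p : ℕ} (hp : p.Prime) (A : Multiset (ZMod p))
    (hcard : Multiset.card A = p) (hnz : ∀ x ∈ A, x ≠ 0) :
    ∀ y : ZMod p, ∃ B ≤ A, B ≠ 0 ∧ B.sum = y := by
  haveI : NeZero p := ⟨hp.pos.ne'⟩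
  intro y
  have hl := card_SS hp A.toList
    (fun x hx => hnz x (by rwa [Multiset.mem_toList] at hx))
  rw [Multiset.coe_toList] at hl
  have hlen : A.toList.length = p := by rw [Multiset.length_toList, hcard]
  rw [hlen, min_self] at hl
  have hU : SS A = Finset.univ := Finset.eq_univ_of_card _ (by
    have hle := Finset.card_le_univ (SS A)
    rw [ZMod.card] at hle
    rw [ZMod.card]
    omega)
  exact mem_SS.mp (hU ▸ Finset.mem_univ y)
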